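/- If k = 8b², then the cubic function J4 = (1/3)(p1³ + p2³ + p3³) − b((q3−q2)p1² + (q1−q3)p2² + (q2−q1)p3²) + b²(z1 p1 + z2 p2 + z3 p3) + 9b³((q2−q1)³ + (q1−q3)³ + (q3−q2)³), with z1 = 4((q2−q1)² + (q1−q3)²) + (q3−q2)², z2 = 4((q3−q2)² + (q2−q1)²) + (q1−q3)², z3 = 4((q1−q3)² + (q3−q2)²) + (q2−q1)², is a constant of motion for H: {H, J4} = 0. -/

import Mathlib

set_option maxHeartbeats 4000000


open scoped BigOperators

/-- Partial derivative of a function on phase space ℝ⁶ in the i-th coordinate. -/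
noncomputable def pd (i : Fin 6) (f : (Fin 6 → ℝ) → ℝ) (x : Fin 6 → ℝ) : ℝ :=
  fderiv ℝ f x (Pi.single i 1)

/-- Canonical Poisson bracket on ℝ⁶ with coordinates (q1,q2,q3,p1,p2,p3). -/
noncomputable def pb (F G : (Fin 6 → ℝ) → ℝ) (x : Fin 6 → ℝ) : ℝ :=
  (pd 0 F x * pd 3 G x - pd 3 F x * pd 0 G x) +
  (pd 1 F x * pd 4 G x - pd 4 F x * pd 1 G x) +
  (pd 2 F x * pd 5 G x - pd 5 F x * pd 2 G x)

/-- Angular momentum components: L1 = q2 p3 − q3 p2, etc. -/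
def L1 (x : Fin 6 → ℝ) : ℝ := x 1 * x 5 - x 2 * x 4
def L2 (x : Fin 6 → ℝ) : ℝ := x 2 * x 3 - x 0 * x 5
def L3 (x : Fin 6 → ℝ) : ℝ := x 0 * x 4 - x 1 * x 3

/-- The Hamiltonian of the coupled oscillators with magnetic terms. -/
noncomputable def Ham (b k : ℝ) (x : Fin 6 → ℝ) : ℝ :=
  (1/2) * (x 3 ^ 2 + x 4 ^ 2 + x 5 ^ 2) + b * (L1 x + L2 x + L3 x) +
  (1/2) * (b ^ 2 + k) * ((x 1 - x 0) ^ 2 + (x 2 - x 1) ^ 2 + (x 0 - x 2) ^ 2)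

/-- J2 = p1 + p2 + p3. -/
def J2 (x : Fin 6 → ℝ) : ℝ := x 3 + x 4 + x 5

/-- J3 = L1 + L2 + L3. -/
def J3 (x : Fin 6 → ℝ) : ℝ := L1 x + L2 x + L3 x

/-- z1 = 4(q21² + q13²) + q32², and cyclic. -/
def z1 (x : Fin 6 → ℝ) : ℝ := 4 * ((x 1 - x 0)^2 + (x 0 - x 2)^2) + (x 2 - x 1)^2
def z2 (x : Fin 6 → ℝ) : ℝ := 4 * ((x 2 - x 1)^2 + (x 1 - x 0)^2) + (x 0 - x 2)^2
def z3 (x : Fin 6 → ℝ) : ℝ := 4 * ((x 0 - x 2)^2 + (x 2 - x 1)^2) + (x 1 - x 0)^2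

/-- The cubic function J4. -/
noncomputable def J4c (b : ℝ) (x : Fin 6 → ℝ) : ℝ :=
  (1/3) * (x 3 ^ 3 + x 4 ^ 3 + x 5 ^ 3)
  - b * ((x 2 - x 1) * x 3 ^ 2 + (x 0 - x 2) * x 4 ^ 2 + (x 1 - x 0) * x 5 ^ 2)
  + b^2 * (z1 x * x 3 + z2 x * x 4 + z3 x * x 5)
  + 9 * b^3 * ((x 1 - x 0)^3 + (x 0 - x 2)^3 + (x 2 - x 1)^3)

lemma hasDerivAt_cubic (a c d e t : ℝ) :
    HasDerivAt (fun s : ℝ => a*s^3 + c*s^2 + d*s + e) (3*a*t^2 + 2*c*t + d) t := by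
  have h := ((((hasDerivAt_pow 3 t).const_mul a).add
      ((hasDerivAt_pow 2 t).const_mul c)).add
      ((hasDerivAt_id' t).const_mul d)).add_const e
  refine h.congr_deriv ?_
  push_cast
  ring

lemma pd_eq {f : (Fin 6 → ℝ) → ℝ} {x : Fin 6 → ℝ} {i : Fin 6}
    (hf : DifferentiableAt ℝ f x) (g : ℝ → ℝ) (d : ℝ)
    (hg : ∀ t, f (Function.update x i t) = g t)
    (hd : HasDerivAt g d (x i)) : pd i f x = d := by
  have hu : HasDerivAt (fun t : ℝ => Function.update x i t) (Pi.single i 1) (x i) := by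
    rw [hasDerivAt_pi]
    intro j
    rcases eq_or_ne j i with h | h
    · subst h
      simp only [Function.update_self, Pi.single_eq_same]
      exact hasDerivAt_id' (x j)
    · simp only [Function.update_of_ne h, Pi.single_eq_of_ne h]
      exact hasDerivAt_const _ _
  have h2 := hf.hasFDerivAt.comp_hasDerivAt_of_eq (x i) hu (Function.update_eq_self i x).symm
  have hgeq : g = f ∘ (fun t : ℝ => Function.update x i t) := by
    funext t; exact (hg t).symm
  have h4 : HasDerivAt g (fderiv ℝ f x (Pi.single i 1)) (x i) := by
    rw [hgeq]; exact h2
  show fderiv ℝ f x (Pi.single i 1) = d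
  exact h4.unique hd

/-- If k = 8b², the cubic J4 is a constant of motion: {H, J4} = 0. -/
theorem stmt16 (b k : ℝ) (hk : k = 8 * b^2) (x : Fin 6 → ℝ) :
    pb (Ham b k) (J4c b) x = 0 := by
  have hdH : DifferentiableAt ℝ (Ham b k) x := by
    unfold Ham L1 L2 L3; fun_prop
  have hdJ : DifferentiableAt ℝ (J4c b) x := by
    unfold J4c z1 z2 z3; fun_prop
  have hH0 : pd 0 (Ham b k) x = (-1*(x 5)*b + (x 4)*b + -1*(x 2)*k + -1*(x 2)*b^2 + -1*(x 1)*k + -1*(x 1)*b^2 + 2*(x 0)*k + 2*(x 0)*b^2) := by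
    refine pd_eq hdH (fun t => (0:ℝ)*t^3 + (k + b^2)*t^2 + (-1*(x 5)*b + (x 4)*b + -1*(x 2)*k + -1*(x 2)*b^2 + -1*(x 1)*k + -1*(x 1)*b^2)*t + ((1/2)*(x 5)^2 + (1/2)*(x 4)^2 + (1/2)*(x 3)^2 + -1*(x 2)*(x 4)*b + (x 2)*(x 3)*b + (x 2)^2*k + (x 2)^2*b^2 + (x 1)*(x 5)*b + -1*(x 1)*(x 3)*b + -1*(x 1)*(x 2)*k + -1*(x 1)*(x 2)*b^2 + (x 1)^2*k + (x 1)^2*b^2)) _ ?_ ?_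
    · intro t
      simp [Ham, L1, L2, L3, Function.update_apply]
      ring
    · have h := hasDerivAt_cubic (0:ℝ) (k + b^2) (-1*(x 5)*b + (x 4)*b + -1*(x 2)*k + -1*(x 2)*b^2 + -1*(x 1)*k + -1*(x 1)*b^2) ((1/2)*(x 5)^2 + (1/2)*(x 4)^2 + (1/2)*(x 3)^2 + -1*(x 2)*(x 4)*b + (x 2)*(x 3)*b + (x 2)^2*k + (x 2)^2*b^2 + (x 1)*(x 5)*b + -1*(x 1)*(x 3)*b + -1*(x 1)*(x 2)*k + -1*(x 1)*(x 2)*b^2 + (x 1)^2*k + (x 1)^2*b^2) (x 0)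
      convert h using 1
      ring
  have hH1 : pd 1 (Ham b k) x = ((x 5)*b + -1*(x 3)*b + -1*(x 2)*k + -1*(x 2)*b^2 + 2*(x 1)*k + 2*(x 1)*b^2 + -1*(x 0)*k + -1*(x 0)*b^2) := by
    refine pd_eq hdH (fun t => (0:ℝ)*t^3 + (k + b^2)*t^2 + ((x 5)*b + -1*(x 3)*b + -1*(x 2)*k + -1*(x 2)*b^2 + -1*(x 0)*k + -1*(x 0)*b^2)*t + ((1/2)*(x 5)^2 + (1/2)*(x 4)^2 + (1/2)*(x 3)^2 + -1*(x 2)*(x 4)*b + (x 2)*(x 3)*b + (x 2)^2*k + (x 2)^2*b^2 + -1*(x 0)*(x 5)*b + (x 0)*(x 4)*b + -1*(x 0)*(x 2)*k + -1*(x 0)*(x 2)*b^2 + (x 0)^2*k + (x 0)^2*b^2)) _ ?_ ?_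
    · intro t
      simp [Ham, L1, L2, L3, Function.update_apply]
      ring
    · have h := hasDerivAt_cubic (0:ℝ) (k + b^2) ((x 5)*b + -1*(x 3)*b + -1*(x 2)*k + -1*(x 2)*b^2 + -1*(x 0)*k + -1*(x 0)*b^2) ((1/2)*(x 5)^2 + (1/2)*(x 4)^2 + (1/2)*(x 3)^2 + -1*(x 2)*(x 4)*b + (x 2)*(x 3)*b + (x 2)^2*k + (x 2)^2*b^2 + -1*(x 0)*(x 5)*b + (x 0)*(x 4)*b + -1*(x 0)*(x 2)*k + -1*(x 0)*(x 2)*b^2 + (x 0)^2*k + (x 0)^2*b^2) (x 1)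
      convert h using 1
      ring
  have hH2 : pd 2 (Ham b k) x = (-1*(x 4)*b + (x 3)*b + 2*(x 2)*k + 2*(x 2)*b^2 + -1*(x 1)*k + -1*(x 1)*b^2 + -1*(x 0)*k + -1*(x 0)*b^2) := by
    refine pd_eq hdH (fun t => (0:ℝ)*t^3 + (k + b^2)*t^2 + (-1*(x 4)*b + (x 3)*b + -1*(x 1)*k + -1*(x 1)*b^2 + -1*(x 0)*k + -1*(x 0)*b^2)*t + ((1/2)*(x 5)^2 + (1/2)*(x 4)^2 + (1/2)*(x 3)^2 + (x 1)*(x 5)*b + -1*(x 1)*(x 3)*b + (x 1)^2*k + (x 1)^2*b^2 + -1*(x 0)*(x 5)*b + (x 0)*(x 4)*b + -1*(x 0)*(x 1)*k + -1*(x 0)*(x 1)*b^2 + (x 0)^2*k + (x 0)^2*b^2)) _ ?_ ?_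
    · intro t
      simp [Ham, L1, L2, L3, Function.update_apply]
      ring
    · have h := hasDerivAt_cubic (0:ℝ) (k + b^2) (-1*(x 4)*b + (x 3)*b + -1*(x 1)*k + -1*(x 1)*b^2 + -1*(x 0)*k + -1*(x 0)*b^2) ((1/2)*(x 5)^2 + (1/2)*(x 4)^2 + (1/2)*(x 3)^2 + (x 1)*(x 5)*b + -1*(x 1)*(x 3)*b + (x 1)^2*k + (x 1)^2*b^2 + -1*(x 0)*(x 5)*b + (x 0)*(x 4)*b + -1*(x 0)*(x 1)*k + -1*(x 0)*(x 1)*b^2 + (x 0)^2*k + (x 0)^2*b^2) (x 2)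
      convert h using 1
      ring
  have hH3 : pd 3 (Ham b k) x = ((x 3) + (x 2)*b + -1*(x 1)*b) := by
    refine pd_eq hdH (fun t => (0:ℝ)*t^3 + ((1/2))*t^2 + ((x 2)*b + -1*(x 1)*b)*t + ((1/2)*(x 5)^2 + (1/2)*(x 4)^2 + -1*(x 2)*(x 4)*b + (x 2)^2*k + (x 2)^2*b^2 + (x 1)*(x 5)*b + -1*(x 1)*(x 2)*k + -1*(x 1)*(x 2)*b^2 + (x 1)^2*k + (x 1)^2*b^2 + -1*(x 0)*(x 5)*b + (x 0)*(x 4)*b + -1*(x 0)*(x 2)*k + -1*(x 0)*(x 2)*b^2 + -1*(x 0)*(x 1)*k + -1*(x 0)*(x 1)*b^2 + (x 0)^2*k + (x 0)^2*b^2)) _ ?_ ?_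
    · intro t
      simp [Ham, L1, L2, L3, Function.update_apply]
      ring
    · have h := hasDerivAt_cubic (0:ℝ) ((1/2)) ((x 2)*b + -1*(x 1)*b) ((1/2)*(x 5)^2 + (1/2)*(x 4)^2 + -1*(x 2)*(x 4)*b + (x 2)^2*k + (x 2)^2*b^2 + (x 1)*(x 5)*b + -1*(x 1)*(x 2)*k + -1*(x 1)*(x 2)*b^2 + (x 1)^2*k + (x 1)^2*b^2 + -1*(x 0)*(x 5)*b + (x 0)*(x 4)*b + -1*(x 0)*(x 2)*k + -1*(x 0)*(x 2)*b^2 + -1*(x 0)*(x 1)*k + -1*(x 0)*(x 1)*b^2 + (x 0)^2*k + (x 0)^2*b^2) (x 3)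
      convert h using 1
      ring
  have hH4 : pd 4 (Ham b k) x = ((x 4) + -1*(x 2)*b + (x 0)*b) := by
    refine pd_eq hdH (fun t => (0:ℝ)*t^3 + ((1/2))*t^2 + (-1*(x 2)*b + (x 0)*b)*t + ((1/2)*(x 5)^2 + (1/2)*(x 3)^2 + (x 2)*(x 3)*b + (x 2)^2*k + (x 2)^2*b^2 + (x 1)*(x 5)*b + -1*(x 1)*(x 3)*b + -1*(x 1)*(x 2)*k + -1*(x 1)*(x 2)*b^2 + (x 1)^2*k + (x 1)^2*b^2 + -1*(x 0)*(x 5)*b + -1*(x 0)*(x 2)*k + -1*(x 0)*(x 2)*b^2 + -1*(x 0)*(x 1)*k + -1*(x 0)*(x 1)*b^2 + (x 0)^2*k + (x 0)^2*b^2)) _ ?_ ?_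
    · intro t
      simp [Ham, L1, L2, L3, Function.update_apply]
      ring
    · have h := hasDerivAt_cubic (0:ℝ) ((1/2)) (-1*(x 2)*b + (x 0)*b) ((1/2)*(x 5)^2 + (1/2)*(x 3)^2 + (x 2)*(x 3)*b + (x 2)^2*k + (x 2)^2*b^2 + (x 1)*(x 5)*b + -1*(x 1)*(x 3)*b + -1*(x 1)*(x 2)*k + -1*(x 1)*(x 2)*b^2 + (x 1)^2*k + (x 1)^2*b^2 + -1*(x 0)*(x 5)*b + -1*(x 0)*(x 2)*k + -1*(x 0)*(x 2)*b^2 + -1*(x 0)*(x 1)*k + -1*(x 0)*(x 1)*b^2 + (x 0)^2*k + (x 0)^2*b^2) (x 4)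
      convert h using 1
      ring
  have hH5 : pd 5 (Ham b k) x = ((x 5) + (x 1)*b + -1*(x 0)*b) := by
    refine pd_eq hdH (fun t => (0:ℝ)*t^3 + ((1/2))*t^2 + ((x 1)*b + -1*(x 0)*b)*t + ((1/2)*(x 4)^2 + (1/2)*(x 3)^2 + -1*(x 2)*(x 4)*b + (x 2)*(x 3)*b + (x 2)^2*k + (x 2)^2*b^2 + -1*(x 1)*(x 3)*b + -1*(x 1)*(x 2)*k + -1*(x 1)*(x 2)*b^2 + (x 1)^2*k + (x 1)^2*b^2 + (x 0)*(x 4)*b + -1*(x 0)*(x 2)*k + -1*(x 0)*(x 2)*b^2 + -1*(x 0)*(x 1)*k + -1*(x 0)*(x 1)*b^2 + (x 0)^2*k + (x 0)^2*b^2)) _ ?_ ?_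
    · intro t
      simp [Ham, L1, L2, L3, Function.update_apply]
      ring
    · have h := hasDerivAt_cubic (0:ℝ) ((1/2)) ((x 1)*b + -1*(x 0)*b) ((1/2)*(x 4)^2 + (1/2)*(x 3)^2 + -1*(x 2)*(x 4)*b + (x 2)*(x 3)*b + (x 2)^2*k + (x 2)^2*b^2 + -1*(x 1)*(x 3)*b + -1*(x 1)*(x 2)*k + -1*(x 1)*(x 2)*b^2 + (x 1)^2*k + (x 1)^2*b^2 + (x 0)*(x 4)*b + -1*(x 0)*(x 2)*k + -1*(x 0)*(x 2)*b^2 + -1*(x 0)*(x 1)*k + -1*(x 0)*(x 1)*b^2 + (x 0)^2*k + (x 0)^2*b^2) (x 5)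
      convert h using 1
      ring
  have hJ0 : pd 0 (J4c b) x = ((x 5)^2*b + -1*(x 4)^2*b + -8*(x 2)*(x 5)*b^2 + -2*(x 2)*(x 4)*b^2 + -8*(x 2)*(x 3)*b^2 + 27*(x 2)^2*b^3 + -2*(x 1)*(x 5)*b^2 + -8*(x 1)*(x 4)*b^2 + -8*(x 1)*(x 3)*b^2 + -27*(x 1)^2*b^3 + 10*(x 0)*(x 5)*b^2 + 10*(x 0)*(x 4)*b^2 + 16*(x 0)*(x 3)*b^2 + -54*(x 0)*(x 2)*b^3 + 54*(x 0)*(x 1)*b^3) := by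
    refine pd_eq hdJ (fun t => (0:ℝ)*t^3 + (5*(x 5)*b^2 + 5*(x 4)*b^2 + 8*(x 3)*b^2 + -27*(x 2)*b^3 + 27*(x 1)*b^3)*t^2 + ((x 5)^2*b + -1*(x 4)^2*b + -8*(x 2)*(x 5)*b^2 + -2*(x 2)*(x 4)*b^2 + -8*(x 2)*(x 3)*b^2 + 27*(x 2)^2*b^3 + -2*(x 1)*(x 5)*b^2 + -8*(x 1)*(x 4)*b^2 + -8*(x 1)*(x 3)*b^2 + -27*(x 1)^2*b^3)*t + ((1/3)*(x 5)^3 + (1/3)*(x 4)^3 + (1/3)*(x 3)^3 + (x 2)*(x 4)^2*b + -1*(x 2)*(x 3)^2*b + 8*(x 2)^2*(x 5)*b^2 + 5*(x 2)^2*(x 4)*b^2 + 5*(x 2)^2*(x 3)*b^2 + -1*(x 1)*(x 5)^2*b + (x 1)*(x 3)^2*b + -8*(x 1)*(x 2)*(x 5)*b^2 + -8*(x 1)*(x 2)*(x 4)*b^2 + -2*(x 1)*(x 2)*(x 3)*b^2 + -27*(x 1)*(x 2)^2*b^3 + 5*(x 1)^2*(x 5)*b^2 + 8*(x 1)^2*(x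 4)*b^2 + 5*(x 1)^2*(x 3)*b^2 + 27*(x 1)^2*(x 2)*b^3)) _ ?_ ?_
    · intro t
      simp [J4c, z1, z2, z3, Function.update_apply]
      ring
    · have h := hasDerivAt_cubic (0:ℝ) (5*(x 5)*b^2 + 5*(x 4)*b^2 + 8*(x 3)*b^2 + -27*(x 2)*b^3 + 27*(x 1)*b^3) ((x 5)^2*b + -1*(x 4)^2*b + -8*(x 2)*(x 5)*b^2 + -2*(x 2)*(x 4)*b^2 + -8*(x 2)*(x 3)*b^2 + 27*(x 2)^2*b^3 + -2*(x 1)*(x 5)*b^2 + -8*(x 1)*(x 4)*b^2 + -8*(x 1)*(x 3)*b^2 + -27*(x 1)^2*b^3) ((1/3)*(x 5)^3 + (1/3)*(x 4)^3 + (1/3)*(x 3)^3 + (x 2)*(x 4)^2*b + -1*(x 2)*(x 3)^2*b + 8*(x 2)^2*(x 5)*b^2 + 5*(x 2)^2*(x 4)*b^2 + 5*(x 2)^2*(x 3)*b^2 + -1*(x 1)*(x 5)^2*b + (x 1)*(x 3)^2*b + -8*(x 1)*(x 2)*(x 5)*b^2 + -8*(x 1)*(x 2)*(x 4)*b^2 +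 -2*(x 1)*(x 2)*(x 3)*b^2 + -27*(x 1)*(x 2)^2*b^3 + 5*(x 1)^2*(x 5)*b^2 + 8*(x 1)^2*(x 4)*b^2 + 5*(x 1)^2*(x 3)*b^2 + 27*(x 1)^2*(x 2)*b^3) (x 0)
      convert h using 1
      ring
  have hJ1 : pd 1 (J4c b) x = (-1*(x 5)^2*b + (x 3)^2*b + -8*(x 2)*(x 5)*b^2 + -8*(x 2)*(x 4)*b^2 + -2*(x 2)*(x 3)*b^2 + -27*(x 2)^2*b^3 + 10*(x 1)*(x 5)*b^2 + 16*(x 1)*(x 4)*b^2 + 10*(x 1)*(x 3)*b^2 + 54*(x 1)*(x 2)*b^3 + -2*(x 0)*(x 5)*b^2 + -8*(x 0)*(x 4)*b^2 + -8*(x 0)*(x 3)*b^2 + -54*(x 0)*(x 1)*b^3 + 27*(x 0)^2*b^3) := by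
    refine pd_eq hdJ (fun t => (0:ℝ)*t^3 + (5*(x 5)*b^2 + 8*(x 4)*b^2 + 5*(x 3)*b^2 + 27*(x 2)*b^3 + -27*(x 0)*b^3)*t^2 + (-1*(x 5)^2*b + (x 3)^2*b + -8*(x 2)*(x 5)*b^2 + -8*(x 2)*(x 4)*b^2 + -2*(x 2)*(x 3)*b^2 + -27*(x 2)^2*b^3 + -2*(x 0)*(x 5)*b^2 + -8*(x 0)*(x 4)*b^2 + -8*(x 0)*(x 3)*b^2 + 27*(x 0)^2*b^3)*t + ((1/3)*(x 5)^3 + (1/3)*(x 4)^3 + (1/3)*(x 3)^3 + (x 2)*(x 4)^2*b + -1*(x 2)*(x 3)^2*b + 8*(x 2)^2*(x 5)*b^2 + 5*(x 2)^2*(x 4)*b^2 + 5*(x 2)^2*(x 3)*b^2 + (x 0)*(x 5)^2*b + -1*(x 0)*(x 4)^2*b + -8*(x 0)*(x 2)*(x 5)*b^2 + -2*(x 0)*(x 2)*(x 4)*b^2 + -8*(x 0)*(x 2)*(x 3)*b^2 + 27*(x 0)*(x 2)^2*b^3 + 5*(x 0)^2*(x 5)*b^2 + 5*(x 0)^2*(x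 4)*b^2 + 8*(x 0)^2*(x 3)*b^2 + -27*(x 0)^2*(x 2)*b^3)) _ ?_ ?_
    · intro t
      simp [J4c, z1, z2, z3, Function.update_apply]
      ring
    · have h := hasDerivAt_cubic (0:ℝ) (5*(x 5)*b^2 + 8*(x 4)*b^2 + 5*(x 3)*b^2 + 27*(x 2)*b^3 + -27*(x 0)*b^3) (-1*(x 5)^2*b + (x 3)^2*b + -8*(x 2)*(x 5)*b^2 + -8*(x 2)*(x 4)*b^2 + -2*(x 2)*(x 3)*b^2 + -27*(x 2)^2*b^3 + -2*(x 0)*(x 5)*b^2 + -8*(x 0)*(x 4)*b^2 + -8*(x 0)*(x 3)*b^2 + 27*(x 0)^2*b^3) ((1/3)*(x 5)^3 + (1/3)*(x 4)^3 + (1/3)*(x 3)^3 + (x 2)*(x 4)^2*b + -1*(x 2)*(x 3)^2*b + 8*(x 2)^2*(x 5)*b^2 + 5*(x 2)^2*(x 4)*b^2 + 5*(x 2)^2*(x 3)*b^2 + (x 0)*(x 5)^2*b + -1*(x 0)*(x 4)^2*b + -8*(x 0)*(x 2)*(x 5)*b^2 + -2*(x 0)*(x 2)*(x 4)*b^2 +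 -8*(x 0)*(x 2)*(x 3)*b^2 + 27*(x 0)*(x 2)^2*b^3 + 5*(x 0)^2*(x 5)*b^2 + 5*(x 0)^2*(x 4)*b^2 + 8*(x 0)^2*(x 3)*b^2 + -27*(x 0)^2*(x 2)*b^3) (x 1)
      convert h using 1
      ring
  have hJ2 : pd 2 (J4c b) x = ((x 4)^2*b + -1*(x 3)^2*b + 16*(x 2)*(x 5)*b^2 + 10*(x 2)*(x 4)*b^2 + 10*(x 2)*(x 3)*b^2 + -8*(x 1)*(x 5)*b^2 + -8*(x 1)*(x 4)*b^2 + -2*(x 1)*(x 3)*b^2 + -54*(x 1)*(x 2)*b^3 + 27*(x 1)^2*b^3 + -8*(x 0)*(x 5)*b^2 + -2*(x 0)*(x 4)*b^2 + -8*(x 0)*(x 3)*b^2 + 54*(x 0)*(x 2)*b^3 + -27*(x 0)^2*b^3) := by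
    refine pd_eq hdJ (fun t => (0:ℝ)*t^3 + (8*(x 5)*b^2 + 5*(x 4)*b^2 + 5*(x 3)*b^2 + -27*(x 1)*b^3 + 27*(x 0)*b^3)*t^2 + ((x 4)^2*b + -1*(x 3)^2*b + -8*(x 1)*(x 5)*b^2 + -8*(x 1)*(x 4)*b^2 + -2*(x 1)*(x 3)*b^2 + 27*(x 1)^2*b^3 + -8*(x 0)*(x 5)*b^2 + -2*(x 0)*(x 4)*b^2 + -8*(x 0)*(x 3)*b^2 + -27*(x 0)^2*b^3)*t + ((1/3)*(x 5)^3 + (1/3)*(x 4)^3 + (1/3)*(x 3)^3 + -1*(x 1)*(x 5)^2*b + (x 1)*(x 3)^2*b + 5*(x 1)^2*(x 5)*b^2 + 8*(x 1)^2*(x 4)*b^2 + 5*(x 1)^2*(x 3)*b^2 + (x 0)*(x 5)^2*b + -1*(x 0)*(x 4)^2*b + -2*(x 0)*(x 1)*(x 5)*b^2 + -8*(x 0)*(x 1)*(x 4)*b^2 + -8*(x 0)*(x 1)*(x 3)*b^2 + -27*(x 0)*(x 1)^2*b^3 + 5*(x 0)^2*(x 5)*b^2 + 5*(x 0)^2*(x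 4)*b^2 + 8*(x 0)^2*(x 3)*b^2 + 27*(x 0)^2*(x 1)*b^3)) _ ?_ ?_
    · intro t
      simp [J4c, z1, z2, z3, Function.update_apply]
      ring
    · have h := hasDerivAt_cubic (0:ℝ) (8*(x 5)*b^2 + 5*(x 4)*b^2 + 5*(x 3)*b^2 + -27*(x 1)*b^3 + 27*(x 0)*b^3) ((x 4)^2*b + -1*(x 3)^2*b + -8*(x 1)*(x 5)*b^2 + -8*(x 1)*(x 4)*b^2 + -2*(x 1)*(x 3)*b^2 + 27*(x 1)^2*b^3 + -8*(x 0)*(x 5)*b^2 + -2*(x 0)*(x 4)*b^2 + -8*(x 0)*(x 3)*b^2 + -27*(x 0)^2*b^3) ((1/3)*(x 5)^3 + (1/3)*(x 4)^3 + (1/3)*(x 3)^3 + -1*(x 1)*(x 5)^2*b + (x 1)*(x 3)^2*b + 5*(x 1)^2*(x 5)*b^2 + 8*(x 1)^2*(x 4)*b^2 + 5*(x 1)^2*(x 3)*b^2 + (x 0)*(x 5)^2*b + -1*(x 0)*(x 4)^2*b + -2*(x 0)*(x 1)*(x 5)*b^2 + -8*(x 0)*(x 1)*(x 4)*b^2 +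 -8*(x 0)*(x 1)*(x 3)*b^2 + -27*(x 0)*(x 1)^2*b^3 + 5*(x 0)^2*(x 5)*b^2 + 5*(x 0)^2*(x 4)*b^2 + 8*(x 0)^2*(x 3)*b^2 + 27*(x 0)^2*(x 1)*b^3) (x 2)
      convert h using 1
      ring
  have hJ3 : pd 3 (J4c b) x = ((x 3)^2 + -2*(x 2)*(x 3)*b + 5*(x 2)^2*b^2 + 2*(x 1)*(x 3)*b + -2*(x 1)*(x 2)*b^2 + 5*(x 1)^2*b^2 + -8*(x 0)*(x 2)*b^2 + -8*(x 0)*(x 1)*b^2 + 8*(x 0)^2*b^2) := by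
    refine pd_eq hdJ (fun t => ((1/3))*t^3 + (-1*(x 2)*b + (x 1)*b)*t^2 + (5*(x 2)^2*b^2 + -2*(x 1)*(x 2)*b^2 + 5*(x 1)^2*b^2 + -8*(x 0)*(x 2)*b^2 + -8*(x 0)*(x 1)*b^2 + 8*(x 0)^2*b^2)*t + ((1/3)*(x 5)^3 + (1/3)*(x 4)^3 + (x 2)*(x 4)^2*b + 8*(x 2)^2*(x 5)*b^2 + 5*(x 2)^2*(x 4)*b^2 + -1*(x 1)*(x 5)^2*b + -8*(x 1)*(x 2)*(x 5)*b^2 + -8*(x 1)*(x 2)*(x 4)*b^2 + -27*(x 1)*(x 2)^2*b^3 + 5*(x 1)^2*(x 5)*b^2 + 8*(x 1)^2*(x 4)*b^2 + 27*(x 1)^2*(x 2)*b^3 + (x 0)*(x 5)^2*b + -1*(x 0)*(x 4)^2*b + -8*(x 0)*(x 2)*(x 5)*b^2 + -2*(x 0)*(x 2)*(x 4)*b^2 + 27*(x 0)*(x 2)^2*b^3 + -2*(x 0)*(x 1)*(x 5)*b^2 + -8*(x 0)*(x 1)*(x 4)*b^2 + -27*(x 0)*(x 1)^2*b^3 + 5*(x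 0)^2*(x 5)*b^2 + 5*(x 0)^2*(x 4)*b^2 + -27*(x 0)^2*(x 2)*b^3 + 27*(x 0)^2*(x 1)*b^3)) _ ?_ ?_
    · intro t
      simp [J4c, z1, z2, z3, Function.update_apply]
      ring
    · have h := hasDerivAt_cubic ((1/3)) (-1*(x 2)*b + (x 1)*b) (5*(x 2)^2*b^2 + -2*(x 1)*(x 2)*b^2 + 5*(x 1)^2*b^2 + -8*(x 0)*(x 2)*b^2 + -8*(x 0)*(x 1)*b^2 + 8*(x 0)^2*b^2) ((1/3)*(x 5)^3 + (1/3)*(x 4)^3 + (x 2)*(x 4)^2*b + 8*(x 2)^2*(x 5)*b^2 + 5*(x 2)^2*(x 4)*b^2 + -1*(x 1)*(x 5)^2*b + -8*(x 1)*(x 2)*(x 5)*b^2 + -8*(x 1)*(x 2)*(x 4)*b^2 + -27*(x 1)*(x 2)^2*b^3 + 5*(x 1)^2*(x 5)*b^2 + 8*(x 1)^2*(x 4)*b^2 + 27*(x 1)^2*(x 2)*b^3 + (x 0)*(x 5)^2*b + -1*(x 0)*(x 4)^2*b + -8*(x 0)*(x 2)*(x 5)*b^2 + -2*(x 0)*(x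 2)*(x 4)*b^2 + 27*(x 0)*(x 2)^2*b^3 + -2*(x 0)*(x 1)*(x 5)*b^2 + -8*(x 0)*(x 1)*(x 4)*b^2 + -27*(x 0)*(x 1)^2*b^3 + 5*(x 0)^2*(x 5)*b^2 + 5*(x 0)^2*(x 4)*b^2 + -27*(x 0)^2*(x 2)*b^3 + 27*(x 0)^2*(x 1)*b^3) (x 3)
      convert h using 1
      ring
  have hJ4 : pd 4 (J4c b) x = ((x 4)^2 + 2*(x 2)*(x 4)*b + 5*(x 2)^2*b^2 + -8*(x 1)*(x 2)*b^2 + 8*(x 1)^2*b^2 + -2*(x 0)*(x 4)*b + -2*(x 0)*(x 2)*b^2 + -8*(x 0)*(x 1)*b^2 + 5*(x 0)^2*b^2) := by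
    refine pd_eq hdJ (fun t => ((1/3))*t^3 + ((x 2)*b + -1*(x 0)*b)*t^2 + (5*(x 2)^2*b^2 + -8*(x 1)*(x 2)*b^2 + 8*(x 1)^2*b^2 + -2*(x 0)*(x 2)*b^2 + -8*(x 0)*(x 1)*b^2 + 5*(x 0)^2*b^2)*t + ((1/3)*(x 5)^3 + (1/3)*(x 3)^3 + -1*(x 2)*(x 3)^2*b + 8*(x 2)^2*(x 5)*b^2 + 5*(x 2)^2*(x 3)*b^2 + -1*(x 1)*(x 5)^2*b + (x 1)*(x 3)^2*b + -8*(x 1)*(x 2)*(x 5)*b^2 + -2*(x 1)*(x 2)*(x 3)*b^2 + -27*(x 1)*(x 2)^2*b^3 + 5*(x 1)^2*(x 5)*b^2 + 5*(x 1)^2*(x 3)*b^2 + 27*(x 1)^2*(x 2)*b^3 + (x 0)*(x 5)^2*b + -8*(x 0)*(x 2)*(x 5)*b^2 + -8*(x 0)*(x 2)*(x 3)*b^2 + 27*(x 0)*(x 2)^2*b^3 + -2*(x 0)*(x 1)*(x 5)*b^2 + -8*(x 0)*(x 1)*(x 3)*b^2 + -27*(x 0)*(x 1)^2*b^3 + 5*(x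 0)^2*(x 5)*b^2 + 8*(x 0)^2*(x 3)*b^2 + -27*(x 0)^2*(x 2)*b^3 + 27*(x 0)^2*(x 1)*b^3)) _ ?_ ?_
    · intro t
      simp [J4c, z1, z2, z3, Function.update_apply]
      ring
    · have h := hasDerivAt_cubic ((1/3)) ((x 2)*b + -1*(x 0)*b) (5*(x 2)^2*b^2 + -8*(x 1)*(x 2)*b^2 + 8*(x 1)^2*b^2 + -2*(x 0)*(x 2)*b^2 + -8*(x 0)*(x 1)*b^2 + 5*(x 0)^2*b^2) ((1/3)*(x 5)^3 + (1/3)*(x 3)^3 + -1*(x 2)*(x 3)^2*b + 8*(x 2)^2*(x 5)*b^2 + 5*(x 2)^2*(x 3)*b^2 + -1*(x 1)*(x 5)^2*b + (x 1)*(x 3)^2*b + -8*(x 1)*(x 2)*(x 5)*b^2 + -2*(x 1)*(x 2)*(x 3)*b^2 + -27*(x 1)*(x 2)^2*b^3 + 5*(x 1)^2*(x 5)*b^2 + 5*(x 1)^2*(x 3)*b^2 + 27*(x 1)^2*(x 2)*b^3 + (x 0)*(x 5)^2*b + -8*(x 0)*(x 2)*(x 5)*b^2 + -8*(x 0)*(x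 2)*(x 3)*b^2 + 27*(x 0)*(x 2)^2*b^3 + -2*(x 0)*(x 1)*(x 5)*b^2 + -8*(x 0)*(x 1)*(x 3)*b^2 + -27*(x 0)*(x 1)^2*b^3 + 5*(x 0)^2*(x 5)*b^2 + 8*(x 0)^2*(x 3)*b^2 + -27*(x 0)^2*(x 2)*b^3 + 27*(x 0)^2*(x 1)*b^3) (x 4)
      convert h using 1
      ring
  have hJ5 : pd 5 (J4c b) x = ((x 5)^2 + 8*(x 2)^2*b^2 + -2*(x 1)*(x 5)*b + -8*(x 1)*(x 2)*b^2 + 5*(x 1)^2*b^2 + 2*(x 0)*(x 5)*b + -8*(x 0)*(x 2)*b^2 + -2*(x 0)*(x 1)*b^2 + 5*(x 0)^2*b^2) := by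
    refine pd_eq hdJ (fun t => ((1/3))*t^3 + (-1*(x 1)*b + (x 0)*b)*t^2 + (8*(x 2)^2*b^2 + -8*(x 1)*(x 2)*b^2 + 5*(x 1)^2*b^2 + -8*(x 0)*(x 2)*b^2 + -2*(x 0)*(x 1)*b^2 + 5*(x 0)^2*b^2)*t + ((1/3)*(x 4)^3 + (1/3)*(x 3)^3 + (x 2)*(x 4)^2*b + -1*(x 2)*(x 3)^2*b + 5*(x 2)^2*(x 4)*b^2 + 5*(x 2)^2*(x 3)*b^2 + (x 1)*(x 3)^2*b + -8*(x 1)*(x 2)*(x 4)*b^2 + -2*(x 1)*(x 2)*(x 3)*b^2 + -27*(x 1)*(x 2)^2*b^3 + 8*(x 1)^2*(x 4)*b^2 + 5*(x 1)^2*(x 3)*b^2 + 27*(x 1)^2*(x 2)*b^3 + -1*(x 0)*(x 4)^2*b + -2*(x 0)*(x 2)*(x 4)*b^2 + -8*(x 0)*(x 2)*(x 3)*b^2 + 27*(x 0)*(x 2)^2*b^3 + -8*(x 0)*(x 1)*(x 4)*b^2 + -8*(x 0)*(x 1)*(x 3)*b^2 + -27*(x 0)*(x 1)^2*b^3 + 5*(x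 0)^2*(x 4)*b^2 + 8*(x 0)^2*(x 3)*b^2 + -27*(x 0)^2*(x 2)*b^3 + 27*(x 0)^2*(x 1)*b^3)) _ ?_ ?_
    · intro t
      simp [J4c, z1, z2, z3, Function.update_apply]
      ring
    · have h := hasDerivAt_cubic ((1/3)) (-1*(x 1)*b + (x 0)*b) (8*(x 2)^2*b^2 + -8*(x 1)*(x 2)*b^2 + 5*(x 1)^2*b^2 + -8*(x 0)*(x 2)*b^2 + -2*(x 0)*(x 1)*b^2 + 5*(x 0)^2*b^2) ((1/3)*(x 4)^3 + (1/3)*(x 3)^3 + (x 2)*(x 4)^2*b + -1*(x 2)*(x 3)^2*b + 5*(x 2)^2*(x 4)*b^2 + 5*(x 2)^2*(x 3)*b^2 + (x 1)*(x 3)^2*b + -8*(x 1)*(x 2)*(x 4)*b^2 + -2*(x 1)*(x 2)*(x 3)*b^2 + -27*(x 1)*(x 2)^2*b^3 + 8*(x 1)^2*(x 4)*b^2 + 5*(x 1)^2*(x 3)*b^2 + 27*(x 1)^2*(x 2)*b^3 + -1*(x 0)*(x 4)^2*b + -2*(x 0)*(x 2)*(x 4)*b^2 + -8*(x 0)*(x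 2)*(x 3)*b^2 + 27*(x 0)*(x 2)^2*b^3 + -8*(x 0)*(x 1)*(x 4)*b^2 + -8*(x 0)*(x 1)*(x 3)*b^2 + -27*(x 0)*(x 1)^2*b^3 + 5*(x 0)^2*(x 4)*b^2 + 8*(x 0)^2*(x 3)*b^2 + -27*(x 0)^2*(x 2)*b^3 + 27*(x 0)^2*(x 1)*b^3) (x 5)
      convert h using 1
      ring
  unfold pb
  rw [hH0, hH1, hH2, hH3, hH4, hH5, hJ0, hJ1, hJ2, hJ3, hJ4, hJ5]
  subst hk
  ring
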